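/- For m = 2^k with k ≥ 1 and b ≥ 1, one has 1 - q_m ≥ (k/2^k) · (b/2^{b/2}) · ln 2, where q_m = m^{-b/m}. -/

import Mathlib

lemma aux_two_mul_le (k : ℕ) (hk : 1 ≤ k) : 2*k ≤ 2^k := by
  induction k, hk using Nat.le_induction with
  | base => norm_num
  | succ n hn ih =>
    have h2n : 2 ≤ 2^n := Nat.one_lt_two_pow_iff.mpr (by omega)
    calc 2*(n+1) = 2*n + 2 := by ring
    _ ≤ 2^n + 2^n := by omega
    _ = 2^(n+1) := by ring

/-- For `m = 2^k`, `k ≥ 1`, `b ≥ 1`, one has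
`1 - m^(-b/m) ≥ (k/2^k) (b/2^(b/2)) log 2`. -/
theorem stmt4 (b : ℝ) (hb : 1 ≤ b) (k : ℕ) (hk : 1 ≤ k) :
    ((k : ℝ) / 2 ^ k) * (b / (2 : ℝ) ^ (b / 2)) * Real.log 2 ≤
      1 - ((2 : ℝ) ^ k) ^ (-(b / (2 : ℝ) ^ k)) := by
  have h2 : (0:ℝ) < 2 := two_pos
  have h2k : (0:ℝ) < (2:ℝ)^k := by positivity
  have hlog : 0 < Real.log 2 := Real.log_pos (by norm_num)
  have hb0 : 0 < b := lt_of_lt_of_le one_pos hb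
  set x : ℝ := b * k * Real.log 2 / 2^k with hx
  have hxpos : 0 ≤ x := by positivity
  have h1 : ((2:ℝ)^k) ^ (-(b / (2:ℝ)^k)) = Real.exp (-x) := by
    rw [Real.rpow_def_of_pos h2k, Real.log_pow, hx]
    congr 1; ring
  have h2' : (2:ℝ) ^ (b/2) = Real.exp (b/2 * Real.log 2) := by
    rw [Real.rpow_def_of_pos h2, mul_comm]
  have hmul : Real.exp (-x) * Real.exp x = 1 := by
    rw [← Real.exp_add]; simp
  have key : x * Real.exp (-x) ≤ 1 - Real.exp (-x) := by
    have h := Real.add_one_le_exp x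
    nlinarith [Real.exp_pos (-x), Real.exp_pos x]
  have hnat : (2*k : ℕ) ≤ 2^k := aux_two_mul_le k hk
  have hxle : x ≤ b/2 * Real.log 2 := by
    rw [hx, div_le_iff₀ h2k]
    have h' : (2:ℝ) * k ≤ 2^k := by
      have := (Nat.cast_le (α := ℝ)).mpr hnat
      push_cast at this; linarith
    nlinarith [mul_le_mul_of_nonneg_left h' (le_of_lt (mul_pos hb0 hlog))]
  have hexple : Real.exp (-(b/2 * Real.log 2)) ≤ Real.exp (-x) :=
    Real.exp_le_exp.2 (neg_le_neg hxle)
  have hL : ((k : ℝ) / 2 ^ k) * (b / (2 : ℝ) ^ (b / 2)) * Real.log 2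
      = (k / 2^k * b * Real.log 2) * Real.exp (-(b/2 * Real.log 2)) := by
    rw [h2', Real.exp_neg, div_eq_mul_inv b]; ring
  rw [h1, hL]
  calc (↑k / 2^k * b * Real.log 2) * Real.exp (-(b/2 * Real.log 2))
      ≤ (↑k / 2^k * b * Real.log 2) * Real.exp (-x) := by
        apply mul_le_mul_of_nonneg_left hexple; positivity
    _ = x * Real.exp (-x) := by rw [hx]; ring
    _ ≤ 1 - Real.exp (-x) := key
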